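/- A real Banach space X has the λ-bounded compact approximation property (λ-BCAP) if and only if the Banach algebra 𝒦(X) of compact operators on X has a λ-bounded left approximate identity (λ-BLAI). -/

import Mathlib

set_option maxSynthPendingDepth 3

open Filter Topology Metric NormedSpace Function

/-- `u` is a finite-rank operator: its range is finite-dimensional. -/
def FinRankOp {X Y : Type*} [NormedAddCommGroup X] [NormedSpace ℝ X]
    [NormedAddCommGroup Y] [NormedSpace ℝ Y] (u : X →L[ℝ] Y) : Prop :=
  FiniteDimensional ℝ (LinearMap.range (u : X →ₗ[ℝ] Y))

/-- `u` is approximable: a limit in operator norm of finite-rank operators. -/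
def ApproxOp {X Y : Type*} [NormedAddCommGroup X] [NormedSpace ℝ X]
    [NormedAddCommGroup Y] [NormedSpace ℝ Y] (u : X →L[ℝ] Y) : Prop :=
  u ∈ closure {f : X →L[ℝ] Y | FinRankOp f}

/-- `u` is a compact operator: it maps the closed unit ball to a relatively compact set. -/
def CompactOp {X Y : Type*} [NormedAddCommGroup X] [NormedSpace ℝ X]
    [NormedAddCommGroup Y] [NormedSpace ℝ Y] (u : X →L[ℝ] Y) : Prop :=
  IsCompact (closure (u '' Metric.closedBall 0 1))

/-- `Y` has the λ-bounded compact approximation property (λ-BCAP). -/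
def HasBCAP (Y : Type*) [NormedAddCommGroup Y] [NormedSpace ℝ Y] (l : ℝ) : Prop :=
  ∀ K : Set Y, IsCompact K → ∀ ε : ℝ, 0 < ε →
    ∃ u : Y →L[ℝ] Y, CompactOp u ∧ ‖u‖ ≤ l ∧ ∀ x ∈ K, ‖u x - x‖ < ε

/-- The Banach algebra 𝒦(X) of compact operators on `X` has a λ-bounded left approximate
identity: a net `(e i)` of compact operators with `‖e i‖ ≤ λ` such that
`‖e i * x - x‖ → 0` for every compact operator `x` (multiplication is composition). -/
def CompactAlgHasBLAI (X : Type u) [NormedAddCommGroup X] [NormedSpace ℝ X] (l : ℝ) : Prop :=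
  ∃ (ι : Type u) (_ : Preorder ι) (_ : Nonempty ι) (_ : IsDirected ι (· ≤ ·))
    (e : ι → X →L[ℝ] X),
    (∀ i, CompactOp (e i) ∧ ‖e i‖ ≤ l) ∧
    ∀ x : X →L[ℝ] X, CompactOp x →
      Tendsto (fun i => ‖(e i).comp x - x‖) atTop (𝓝 (0 : ℝ))

section Aux

variable {X Y : Type*} [NormedAddCommGroup X] [NormedSpace ℝ X]
  [NormedAddCommGroup Y] [NormedSpace ℝ Y]

lemma aux_opNorm_le_of_closedBall (f : X →L[ℝ] Y) {c : ℝ} (hc : 0 ≤ c)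
    (h : ∀ y ∈ Metric.closedBall (0:X) 1, ‖f y‖ ≤ c) : ‖f‖ ≤ c := by
  refine f.opNorm_le_bound hc (fun x => ?_)
  rcases eq_or_ne x 0 with rfl | hx
  · simp
  · have hnx : (0:ℝ) < ‖x‖ := norm_pos_iff.2 hx
    have h1 : ‖x‖⁻¹ • x ∈ Metric.closedBall (0:X) 1 := by
      simp [mem_closedBall_zero_iff, norm_smul, abs_inv, inv_mul_cancel₀ hnx.ne']
    have := h _ h1
    rw [map_smul, norm_smul, norm_inv, norm_norm] at this
    calc ‖f x‖ = ‖x‖ * (‖x‖⁻¹ * ‖f x‖) := by field_simp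
    _ ≤ ‖x‖ * c := by
        apply mul_le_mul_of_nonneg_left _ hnx.le
        simpa using this
    _ = c * ‖x‖ := mul_comm _ _

lemma aux_compactOp_zero : CompactOp (0 : X →L[ℝ] Y) := by
  apply IsCompact.of_isClosed_subset (isCompact_singleton (x := (0:Y))) isClosed_closure
  apply closure_minimal _ isClosed_singleton
  rintro y ⟨x, -, rfl⟩; simp

lemma aux_compactOp_smulRight (g : X →L[ℝ] ℝ) (y : Y) :
    CompactOp (g.smulRight y) := by
  have hK : IsCompact ((fun t : ℝ => t • y) '' Set.Icc (-‖g‖) ‖g‖) :=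
    (isCompact_Icc).image (by continuity)
  apply IsCompact.of_isClosed_subset hK isClosed_closure
  apply closure_minimal _ hK.isClosed
  rintro z ⟨x, hx, rfl⟩
  refine ⟨g x, ?_, rfl⟩
  have : |g x| ≤ ‖g‖ := by
    have := g.le_opNorm x
    simpa using this.trans (by nlinarith [mem_closedBall_zero_iff.1 hx, g.opNorm_nonneg])
  exact abs_le.1 this

end Aux

/-- Theorem A (compact case): `X` has λ-BCAP iff 𝒦(X) has a λ-BLAI. -/
theorem bcap_iff_compact_blai (X : Type u) [NormedAddCommGroup X] [NormedSpace ℝ X]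
    [CompleteSpace X] (l : ℝ) (hl : 1 ≤ l) :
    HasBCAP X l ↔ CompactAlgHasBLAI X l := by
  constructor
  · -- BCAP → BLAI
    intro hb
    classical
    refine ⟨{S : Set X // IsCompact S} × ℕ, inferInstance,
      ⟨(⟨∅, isCompact_empty⟩, 0)⟩, ?_,
      fun p => Classical.choose (hb p.1.1 p.1.2 (1/(p.2+1)) (by positivity)), ?_, ?_⟩
    · refine ⟨fun a b => ⟨(⟨a.1.1 ∪ b.1.1, a.1.2.union b.1.2⟩, max a.2 b.2), ?_, ?_⟩⟩
      · exact ⟨Set.subset_union_left, le_max_left _ _⟩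
      · exact ⟨Set.subset_union_right, le_max_right _ _⟩
    · intro p
      have hs := Classical.choose_spec (hb p.1.1 p.1.2 (1/(p.2+1)) (by positivity))
      exact ⟨hs.1, hs.2.1⟩
    · intro x hx
      rw [Metric.tendsto_nhds]
      intro ε hε
      obtain ⟨N, hN⟩ := exists_nat_one_div_lt hε
      set K : Set X := closure (x '' Metric.closedBall 0 1) with hKdef
      filter_upwards [Ici_mem_atTop ((⟨K, hx⟩ : {S : Set X // IsCompact S}), N)] with p hp
      have hs := Classical.choose_spec (hb p.1.1 p.1.2 (1/(p.2+1)) (by positivity))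
      have hb1 : ‖(Classical.choose (hb p.1.1 p.1.2 (1/(p.2+1)) (by positivity))).comp x - x‖
          ≤ 1/(p.2+1) := by
        apply aux_opNorm_le_of_closedBall _ (by positivity)
        intro y hy
        have hxy : x y ∈ p.1.1 := hp.1 (subset_closure ⟨y, hy, rfl⟩)
        simpa using (hs.2.2 (x y) hxy).le
      have h2 : (1:ℝ)/(p.2+1) ≤ 1/(N+1) := by
        apply one_div_le_one_div_of_le (by positivity)
        have : (N:ℝ) ≤ p.2 := by exact_mod_cast hp.2
        linarith
      rw [Real.dist_eq, sub_zero, abs_of_nonneg (norm_nonneg _)]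
      exact lt_of_le_of_lt (hb1.trans h2) hN
  · -- BLAI → BCAP
    rintro ⟨ι, pre, ne, dir, e, hprop, hconv⟩ K hK ε hε
    haveI := ne; haveI := dir
    haveI : (atTop : Filter ι).NeBot := atTop_neBot_iff.2 ⟨ne, dir⟩
    by_cases hX : ∀ z : X, z = 0
    · refine ⟨0, aux_compactOp_zero, by simpa using zero_le_one.trans hl, fun x hx => ?_⟩
      simp [hX x, hε]
    · push_neg at hX
      obtain ⟨z, hz⟩ := hX
      obtain ⟨g, hg1, hgz⟩ := exists_dual_vector ℝ z (norm_ne_zero_iff.2 hz)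
      have hz' : (0:ℝ) < ‖z‖ := norm_pos_iff.2 hz
      have hpt : ∀ y : X, Tendsto (fun i => ‖e i y - y‖) atTop (𝓝 0) := by
        intro y
        have hT := hconv (g.smulRight y) (aux_compactOp_smulRight g y)
        refine squeeze_zero (fun i => norm_nonneg _) (fun i => ?_) hT
        have happ : ((e i).comp (g.smulRight y) - g.smulRight y) z = ‖z‖ • (e i y - y) := by
          simp [ContinuousLinearMap.sub_apply, ContinuousLinearMap.comp_apply,
            ContinuousLinearMap.smulRight_apply, hgz, smul_sub, map_smul]
        have hle := ((e i).comp (g.smulRight y) - g.smulRight y).le_opNorm z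
        rw [happ, norm_smul, norm_norm] at hle
        refine le_of_mul_le_mul_right ?_ hz'
        calc ‖e i y - y‖ * ‖z‖ = ‖z‖ * ‖e i y - y‖ := mul_comm _ _
        _ ≤ ‖(e i).comp (g.smulRight y) - g.smulRight y‖ * ‖z‖ := hle
      have hl0 : (0:ℝ) < l := lt_of_lt_of_le one_pos hl
      have hδ : (0:ℝ) < ε/(4*l) := by positivity
      obtain ⟨t, htK, htf, htc⟩ := hK.finite_cover_balls hδ
      have hev : ∀ᶠ i in atTop, ∀ c ∈ t, ‖e i c - c‖ < ε/(4*l) := by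
        rw [eventually_all_finite htf]
        intro c _
        exact (hpt c).eventually_lt_const hδ
      obtain ⟨i, hi⟩ := hev.exists
      refine ⟨e i, (hprop i).1, (hprop i).2, fun x hx => ?_⟩
      obtain ⟨c, hc, hxc⟩ := Set.mem_iUnion₂.1 (htc hx)
      have h2 : ‖x - c‖ < ε/(4*l) := by
        have := mem_ball.1 hxc
        rwa [dist_eq_norm] at this
      have h1 : ‖e i x - e i c‖ ≤ l * ‖x - c‖ := by
        have hle := (e i).le_opNorm (x - c)
        rw [map_sub] at hle
        exact hle.trans (mul_le_mul_of_nonneg_right (hprop i).2 (norm_nonneg _))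
      have h3 : ‖e i c - c‖ < ε/(4*l) := hi c hc
      have h4 : ‖c - x‖ < ε/(4*l) := by rw [norm_sub_rev]; exact h2
      have h5 : l * (ε/(4*l)) = ε/4 := by field_simp
      have h6 : ε/(4*l) ≤ ε/4 := by
        apply div_le_div_of_nonneg_left hε.le (by norm_num) (by linarith)
      have h7 : l * ‖x - c‖ < l * (ε/(4*l)) := by
        exact mul_lt_mul_of_pos_left h2 hl0
      calc ‖e i x - x‖ = ‖(e i x - e i c) + (e i c - c) + (c - x)‖ := by abel_nf
      _ ≤ ‖e i x - e i c‖ + ‖e i c - c‖ + ‖c - x‖ := norm_add₃_le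
      _ < ε := by linarith
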